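/- Let A be a primitive axial algebra of Jordan type η over a field F with char F ≠ 2, and let a, b be distinct η-axes in A. Then the subalgebra N_{a,b} generated by a and b is 3-dimensional precisely when ab ≠ 0 and there exist a nonzero element σ ∈ N_{a,b} and a scalar φ ∈ F such that, setting π = (1−η)φ − η, one has ab = σ + ηa + ηb and σv = πv for each v ∈ {a, b, σ}. Furthermore, when N_{a,b} is 3-dimensional, it has an identity element if and only if π ≠ 0, in which case the identity of N_{a,b} is (1/π)σ. -/

import Mathlib

universe u v

section Prelim

variable (F : Type u) {A : Type v} [Field F] [NonUnitalNonAssocCommRing A]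
  [Module F A] [SMulCommClass F A A] [IsScalarTower F A A]

/-- The λ-eigenspace of the adjoint map `ad_a : x ↦ a * x`. -/
def eigSp (a : A) (l : F) : Submodule F A where
  carrier := {x | a * x = l • x}
  add_mem' := by
    intro x y hx hy
    simp only [Set.mem_setOf_eq] at *
    rw [mul_add, hx, hy, smul_add]
  zero_mem' := by simp
  smul_mem' := by
    intro c x hx
    simp only [Set.mem_setOf_eq] at *
    rw [mul_smul_comm, hx, smul_smul, smul_smul, mul_comm]

/-- `a` is a (primitive) `η`-axis. -/
structure IsAxis (η : F) (a : A) : Prop where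
  ne_zero : a ≠ 0
  idem : a * a = a
  decomp : eigSp F a 1 ⊔ eigSp F a 0 ⊔ eigSp F a η = ⊤
  prim : eigSp F a 1 = Submodule.span F {a}
  f11 : ∀ x ∈ eigSp F a 1, ∀ y ∈ eigSp F a 1, x * y ∈ eigSp F a 1
  f00 : ∀ x ∈ eigSp F a 0, ∀ y ∈ eigSp F a 0, x * y ∈ eigSp F a 0
  f10 : ∀ x ∈ eigSp F a 1, ∀ y ∈ eigSp F a 0, x * y = 0
  fpe : ∀ x ∈ eigSp F a 1 ⊔ eigSp F a 0, ∀ y ∈ eigSp F a η, x * y ∈ eigSp F a η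
  fee : ∀ x ∈ eigSp F a η, ∀ y ∈ eigSp F a η, x * y ∈ eigSp F a 1 ⊔ eigSp F a 0

/-- `τ` is the Miyamoto involution of the `η`-axis `a`. -/
structure IsMiyamoto (η : F) (a : A) (τ : A → A) : Prop where
  fixes : ∀ x ∈ eigSp F a 1 ⊔ eigSp F a 0, τ x = x
  negates : ∀ x ∈ eigSp F a η, τ x = -x
  map_add : ∀ x y : A, τ (x + y) = τ x + τ y
  map_smul : ∀ (c : F) (x : A), τ (c • x) = c • τ x
  map_mul : ∀ x y : A, τ (x * y) = τ x * τ y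
  bijective : Function.Bijective τ

/-- `c = φ_a(u)`, the projection of `u` to `F·a` w.r.t. the axis `a`. -/
def IsProjCoeff (η : F) (a u : A) (c : F) : Prop :=
  ∃ u0 ∈ eigSp F a 0, ∃ ue ∈ eigSp F a η, u = c • a + u0 + ue

/-- `e` is an identity element of the subalgebra `N`. -/
def IsIdentOf (N : NonUnitalSubalgebra F A) (e : A) : Prop :=
  e ∈ N ∧ ∀ z ∈ N, e * z = z

/-- `ψ` is an `F`-algebra automorphism of `A`. -/
structure IsAlgAut (ψ : A → A) : Prop where
  map_add : ∀ x y : A, ψ (x + y) = ψ x + ψ y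
  map_smul : ∀ (c : F) (x : A), ψ (c • x) = c • ψ x
  map_mul : ∀ x y : A, ψ (x * y) = ψ x * ψ y
  bijective : Function.Bijective ψ

/-- The graph `Δ_𝒜`: distinct axes are adjacent iff their product is nonzero. -/
def axesGraph (𝒜 : Set A) : SimpleGraph 𝒜 where
  Adj x y := x ≠ y ∧ (x : A) * (y : A) ≠ 0
  symm := by
    constructor
    rintro x y ⟨hxy, hm⟩
    exact ⟨hxy.symm, by rwa [mul_comm]⟩
  loopless := by constructor; rintro x ⟨h, -⟩; exact h rfl

/-- Multiplication of the Jordan algebra of Clifford type `J(V,B) = F·e ⊕ V`. -/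
def cliffMul {V : Type*} [AddCommGroup V] [Module F V]
    (B : V →ₗ[F] V →ₗ[F] F) (x y : F × V) : F × V :=
  (x.1 * y.1 + B x.2 y.2, x.1 • y.2 + y.1 • x.2)

end Prelim

/-- An isomorphism of `A` with a Jordan algebra of Clifford type `J(V,B)`. -/
structure CliffordTypeIso (F : Type u) (A : Type v) [Field F]
    [NonUnitalNonAssocCommRing A] [Module F A] [SMulCommClass F A A]
    [IsScalarTower F A A] where
  V : Type v
  [instAdd : AddCommGroup V]
  [instMod : Module F V]
  B : V →ₗ[F] V →ₗ[F] F
  symm : ∀ v w : V, B v w = B w v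
  iso : A ≃ₗ[F] F × V
  mul_compat : ∀ x y : A, iso (x * y) = cliffMul F B (iso x) (iso y)
section Work
set_option linter.unusedSectionVars false

variable {F : Type u} {A : Type v} [Field F] [NonUnitalNonAssocCommRing A]
  [Module F A] [SMulCommClass F A A] [IsScalarTower F A A]

lemma mem_eig {a x : A} {l : F} : x ∈ eigSp F a l ↔ a * x = l • x := Iff.rfl

lemma span_mul_self {s : Set A}
    (h : ∀ x ∈ s, ∀ y ∈ s, x * y ∈ Submodule.span F s) :
    ∀ x ∈ Submodule.span F s, ∀ y ∈ Submodule.span F s,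
      x * y ∈ Submodule.span F s := by
  intro x hx y hy
  induction hx, hy using Submodule.span_induction₂ with
  | mem_mem u v hu hv => exact h u hu v hv
  | zero_left y hy => simp
  | zero_right x hx => simp
  | add_left x y z hx hy hz ih1 ih2 => rw [add_mul]; exact add_mem ih1 ih2
  | add_right x y z hx hy hz ih1 ih2 => rw [mul_add]; exact add_mem ih1 ih2
  | smul_left r x y hx hy ih => rw [smul_mul_assoc]; exact Submodule.smul_mem _ _ ih
  | smul_right r x y hx hy ih => rw [mul_smul_comm]; exact Submodule.smul_mem _ _ ih

lemma adjoin_le_span {s t : Set A} (hts : t ⊆ (Submodule.span F s : Set A))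
    (h : ∀ x ∈ s, ∀ y ∈ s, x * y ∈ Submodule.span F s) :
    (NonUnitalAlgebra.adjoin F t).toSubmodule ≤ Submodule.span F s := by
  have hle : NonUnitalAlgebra.adjoin F t ≤
      (Submodule.span F s).toNonUnitalSubalgebra
        (fun x y hx hy => span_mul_self h x hx y hy) :=
    NonUnitalAlgebra.adjoin_le hts
  intro x hx
  exact hle hx

lemma exists_decomp {η : F} {a : A} (ha : IsAxis F η a) (x : A) :
    ∃ c : F, ∃ x0 ∈ eigSp F a 0, ∃ xe ∈ eigSp F a η, x = c • a + x0 + xe := by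
  have hx : x ∈ eigSp F a 1 ⊔ eigSp F a 0 ⊔ eigSp F a η := by
    rw [ha.decomp]; exact Submodule.mem_top
  rw [Submodule.mem_sup] at hx
  obtain ⟨y, hy, xe, hxe, hsum⟩ := hx
  rw [Submodule.mem_sup] at hy
  obtain ⟨u, hu, x0, hx0, hy'⟩ := hy
  rw [ha.prim, Submodule.mem_span_singleton] at hu
  obtain ⟨c, rfl⟩ := hu
  exact ⟨c, x0, hx0, xe, hxe, by rw [← hsum, ← hy']⟩

lemma decomp_zero {η : F} (hη0 : η ≠ 0) (hη1 : η ≠ 1) {a : A} (haa : a * a = a)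
    {c : F} {x0 xe : A} (h0 : x0 ∈ eigSp F a 0) (he : xe ∈ eigSp F a η)
    (hsum : c • a + x0 + xe = 0) : c • a = 0 ∧ x0 = 0 ∧ xe = 0 := by
  have h0' : a * x0 = 0 := by rw [mem_eig.mp h0, zero_smul]
  have he' : a * xe = η • xe := mem_eig.mp he
  have H1 : c • a + η • xe = 0 := by
    have := congrArg (a * ·) hsum
    simpa [mul_add, mul_smul_comm, haa, h0', he'] using this
  have H2 : c • a + (η * η) • xe = 0 := by
    have := congrArg (a * ·) H1
    simpa [mul_add, mul_smul_comm, haa, he', smul_smul] using this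
  have hxe : xe = 0 := by
    have h3 : (η * η - η) • xe = 0 := by
      have := sub_eq_zero.mpr (H2.trans H1.symm)
      simpa [sub_smul, add_sub_add_left_eq_sub] using this
    rcases smul_eq_zero.mp h3 with h | h
    · exfalso
      have h4 : η * (η - 1) = 0 := by linear_combination h
      rcases mul_eq_zero.mp h4 with h' | h'
      · exact hη0 h'
      · exact hη1 (by linear_combination h')
    · exact h
  have hca : c • a = 0 := by
    have := H1; rw [hxe, smul_zero, add_zero] at this; exact this
  refine ⟨hca, ?_, hxe⟩
  rw [hca, hxe, zero_add, add_zero] at hsum; exact hsum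

end Work
section Work2
set_option linter.unusedSectionVars false

variable {F : Type u} {A : Type v} [Field F] [NonUnitalNonAssocCommRing A]
  [Module F A] [SMulCommClass F A A] [IsScalarTower F A A]

lemma decomp_eq {η : F} (hη0 : η ≠ 0) (hη1 : η ≠ 1) {a : A} (haa : a * a = a)
    {c c' : F} {x0 x0' xe xe' : A}
    (h0 : x0 ∈ eigSp F a 0) (h0' : x0' ∈ eigSp F a 0)
    (he : xe ∈ eigSp F a η) (he' : xe' ∈ eigSp F a η)
    (h : c • a + x0 + xe = c' • a + x0' + xe') :
    c • a = c' • a ∧ x0 = x0' ∧ xe = xe' := by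
  have hz : (c - c') • a + (x0 - x0') + (xe - xe') = 0 := by
    rw [← sub_eq_zero] at h
    rw [← h]; module
  obtain ⟨h1, h2, h3⟩ := decomp_zero hη0 hη1 haa (sub_mem h0 h0') (sub_mem he he') hz
  rw [sub_smul, sub_eq_zero] at h1
  rw [sub_eq_zero] at h2 h3
  exact ⟨h1, h2, h3⟩

lemma smul_cancel {x : A} (hx : x ≠ 0) {c c' : F} (h : c • x = c' • x) : c = c' := by
  have : (c - c') • x = 0 := by rw [sub_smul, h, sub_self]
  rcases smul_eq_zero.mp this with h' | h'
  · exact sub_eq_zero.mp h'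
  · exact absurd h' hx

lemma decomp_eq' {η : F} (hη0 : η ≠ 0) (hη1 : η ≠ 1) {a : A} (ha0 : a ≠ 0)
    (haa : a * a = a) {c c' : F} {x0 x0' xe xe' : A}
    (h0 : x0 ∈ eigSp F a 0) (h0' : x0' ∈ eigSp F a 0)
    (he : xe ∈ eigSp F a η) (he' : xe' ∈ eigSp F a η)
    (h : c • a + x0 + xe = c' • a + x0' + xe') :
    c = c' ∧ x0 = x0' ∧ xe = xe' := by
  obtain ⟨h1, h2, h3⟩ := decomp_eq hη0 hη1 haa h0 h0' he he' h
  exact ⟨smul_cancel ha0 h1, h2, h3⟩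

end Work2
section Work3
set_option linter.unusedSectionVars false
set_option maxHeartbeats 1000000

variable {F : Type u} {A : Type v} [Field F] [NonUnitalNonAssocCommRing A]
  [Module F A] [SMulCommClass F A A] [IsScalarTower F A A]

lemma finrank_span_pair_le (x y : A) :
    Module.finrank F (Submodule.span F {x, y} : Submodule F A) ≤ 2 := by
  classical
  refine le_trans (finrank_span_le_card _) ?_
  have h : ({x, y} : Set A).toFinset ⊆ ({x, y} : Finset A) := by
    intro t ht; simp at ht ⊢; tauto
  refine le_trans (Finset.card_le_card h) ?_
  exact le_trans (Finset.card_insert_le _ _) (by simp)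

lemma side {η : F} (hchar : (2 : F) ≠ 0) (hη0 : η ≠ 0) (hη1 : η ≠ 1)
    {a b : A} (ha : IsAxis F η a) (hb : IsAxis F η b)
    (h3 : Module.finrank F
      ((NonUnitalAlgebra.adjoin F ({a, b} : Set A)).toSubmodule) = 3) :
    ∃ φ : F, ∃ b0 ∈ eigSp F a 0, ∃ be ∈ eigSp F a η,
      b0 ≠ 0 ∧ be ≠ 0 ∧ b = φ • a + b0 + be ∧ a * b = φ • a + η • be ∧
      (2 : F) • (b0 * b0) = (1 + 2 * η - 2 * φ) • b0 ∧
      ∀ ψ : F, ∀ a0 ∈ eigSp F b 0, ∀ ae ∈ eigSp F b η, a = ψ • b + a0 + ae →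
        2 * ((1 - η) * ψ) = η * (2 * φ + 1 - 2 * η) ∧ φ * φ = ψ * φ := by
  have h1mη : (1 : F) - η ≠ 0 := sub_ne_zero_of_ne (Ne.symm hη1)
  obtain ⟨φ, b0, hb0, be, hbe, hdec⟩ := exists_decomp ha b
  have hab0 : a * b0 = 0 := by rw [mem_eig.mp hb0, zero_smul]
  have hb0a : b0 * a = 0 := by rw [mul_comm]; exact hab0
  have habe : a * be = η • be := mem_eig.mp hbe
  have hbea : be * a = η • be := by rw [mul_comm]; exact habe
  have hab : a * b = φ • a + η • be := by
    rw [hdec, mul_add, mul_add, mul_smul_comm, ha.idem, hab0, habe, add_zero]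
  -- a tool for deriving contradictions from 2-dimensional enveloping spans
  have hcontra : ∀ x y : A, ({a, b} : Set A) ⊆ (Submodule.span F {x, y} : Set A) →
      (∀ u ∈ ({x, y} : Set A), ∀ v ∈ ({x, y} : Set A),
        u * v ∈ Submodule.span F {x, y}) → False := by
    intro x y hsub hmul
    have hle := adjoin_le_span hsub hmul
    haveI : FiniteDimensional F (Submodule.span F ({x, y} : Set A)) :=
      FiniteDimensional.span_of_finite F (Set.toFinite _)
    have hmono := Submodule.finrank_mono hle
    rw [h3] at hmono
    have h2' := finrank_span_pair_le (F := F) x y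
    omega
  by_cases hbez : be = 0
  · exfalso
    have hb' : b = φ • a + b0 := by rw [hdec, hbez, add_zero]
    have habφ : a * b = φ • a := by rw [hab, hbez, smul_zero, add_zero]
    have haS : a ∈ Submodule.span F ({a, b} : Set A) :=
      Submodule.subset_span (by simp)
    have hbS : b ∈ Submodule.span F ({a, b} : Set A) :=
      Submodule.subset_span (by simp)
    refine hcontra a b Submodule.subset_span ?_
    intro u hu v hv
    simp only [Set.mem_insert_iff, Set.mem_singleton_iff] at hu hv
    rcases hu with rfl | rfl <;> rcases hv with rfl | rfl
    · rw [ha.idem]; exact haS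
    · rw [habφ]; exact Submodule.smul_mem _ _ haS
    · rw [mul_comm, habφ]; exact Submodule.smul_mem _ _ haS
    · rw [hb.idem]; exact hbS
  by_cases hb0z : b0 = 0
  · exfalso
    have hb' : b = φ • a + be := by rw [hdec, hb0z, add_zero]
    have hee := ha.fee be hbe be hbe
    rw [Submodule.mem_sup] at hee
    obtain ⟨u, hu, v, hv, huv⟩ := hee
    rw [ha.prim, Submodule.mem_span_singleton] at hu
    obtain ⟨β, rfl⟩ := hu
    -- b * b = b in a-coordinates
    have hprod : (φ * φ + β) • a + v + (2 * (φ * η)) • be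
        = φ • a + (0 : A) + (1 : F) • be := by
      have h : (φ • a + be) * (φ • a + be) = φ • a + be := by
        rw [← hb']; exact hb.idem
      simp only [mul_add, add_mul, smul_mul_assoc, mul_smul_comm, ha.idem,
        habe, hbea, smul_smul] at h
      rw [← huv] at h
      linear_combination (norm := module) h
    obtain ⟨-, hv0, -⟩ := decomp_eq' hη0 hη1 ha.ne_zero ha.idem hv (zero_mem _)
      (Submodule.smul_mem _ _ hbe) (Submodule.smul_mem _ _ hbe) hprod
    have hbebe : be * be = β • a := by rw [← huv, hv0, add_zero]
    have haS : a ∈ Submodule.span F ({a, be} : Set A) :=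
      Submodule.subset_span (by simp)
    have hbeS : be ∈ Submodule.span F ({a, be} : Set A) :=
      Submodule.subset_span (by simp)
    refine hcontra a be ?_ ?_
    · intro u hu
      simp only [Set.mem_insert_iff, Set.mem_singleton_iff] at hu
      rcases hu with rfl | rfl
      · exact haS
      · rw [hb']
        exact Submodule.add_mem _ (Submodule.smul_mem _ _ haS) hbeS
    · intro u hu v' hv'
      simp only [Set.mem_insert_iff, Set.mem_singleton_iff] at hu hv'
      rcases hu with rfl | rfl <;> rcases hv' with rfl | rfl
      · rw [ha.idem]; exact haS
      · rw [habe]; exact Submodule.smul_mem _ _ hbeS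
      · rw [hbea]; exact Submodule.smul_mem _ _ hbeS
      · rw [hbebe]; exact Submodule.smul_mem _ _ haS
  -- main case: b0 ≠ 0 and be ≠ 0
  set N := (NonUnitalAlgebra.adjoin F ({a, b} : Set A)).toSubmodule with hNdef
  have haN : a ∈ N := by
    rw [NonUnitalSubalgebra.mem_toSubmodule]
    exact NonUnitalAlgebra.subset_adjoin F (by simp)
  have hbN : b ∈ N := by
    rw [NonUnitalSubalgebra.mem_toSubmodule]
    exact NonUnitalAlgebra.subset_adjoin F (by simp)
  have habN : a * b ∈ N := by
    rw [NonUnitalSubalgebra.mem_toSubmodule] at haN hbN ⊢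
    exact mul_mem haN hbN
  have hbeN : be ∈ N := by
    have h1 : η • be ∈ N := by
      have h2 := Submodule.sub_mem _ habN (Submodule.smul_mem _ φ haN)
      have h3 : a * b - φ • a = η • be := by rw [hab]; module
      rwa [h3] at h2
    have h4 := Submodule.smul_mem _ η⁻¹ h1
    rwa [smul_smul, inv_mul_cancel₀ hη0, one_smul] at h4
  have hb0N : b0 ∈ N := by
    have h1 := Submodule.sub_mem _ (Submodule.sub_mem _ hbN
      (Submodule.smul_mem _ φ haN)) hbeN
    have h2 : b - φ • a - be = b0 := by rw [hdec]; module
    rwa [h2] at h1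
  set T : Submodule F A := Submodule.span F {a, b0, be} with hTdef
  have hTle : T ≤ N := by
    rw [hTdef, Submodule.span_le]
    rintro x hx
    simp only [Set.mem_insert_iff, Set.mem_singleton_iff] at hx
    rcases hx with rfl | rfl | rfl
    · exact haN
    · exact hb0N
    · exact hbeN
  have hli : LinearIndependent F ![a, b0, be] := by
    rw [Fintype.linearIndependent_iff]
    intro g hg
    rw [Fin.sum_univ_three] at hg
    simp only [Matrix.cons_val_zero, Matrix.cons_val_one, Matrix.head_cons,
      Matrix.cons_val_two, Matrix.tail_cons] at hg
    obtain ⟨h1, h2, h3⟩ := decomp_zero hη0 hη1 ha.idem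
      (Submodule.smul_mem _ _ hb0) (Submodule.smul_mem _ _ hbe) hg
    intro i
    fin_cases i
    · exact (smul_eq_zero.mp h1).resolve_right ha.ne_zero
    · exact (smul_eq_zero.mp h2).resolve_right hb0z
    · exact (smul_eq_zero.mp h3).resolve_right hbez
  have hrange : Set.range ![a, b0, be] = {a, b0, be} := by
    simp [Matrix.range_cons, Matrix.range_empty]
    ext x; simp; tauto
  have hT3 : Module.finrank F T = 3 := by
    have h := finrank_span_eq_card (R := F) hli
    rw [hrange] at h
    simpa using h
  haveI : FiniteDimensional F N := FiniteDimensional.of_finrank_pos (by rw [h3]; norm_num)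
  have hTN : T = N := Submodule.eq_of_le_of_finrank_le hTle (by rw [h3, hT3])
  have hmulT : ∀ x ∈ T, ∀ y ∈ T, x * y ∈ T := by
    intro x hx y hy
    rw [hTN] at hx hy ⊢
    rw [NonUnitalSubalgebra.mem_toSubmodule] at hx hy ⊢
    exact mul_mem hx hy
  have haT : a ∈ T := Submodule.subset_span (by simp)
  have hb0T : b0 ∈ T := Submodule.subset_span (by simp)
  have hbeT : be ∈ T := Submodule.subset_span (by simp)
  have hcoord : ∀ x ∈ T, ∃ α β γ : F, x = α • a + β • b0 + γ • be := by
    intro x hx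
    rw [hTdef, Submodule.mem_span_insert] at hx
    obtain ⟨α, z, hz, rfl⟩ := hx
    rw [Submodule.mem_span_insert] at hz
    obtain ⟨β, w, hw, rfl⟩ := hz
    rw [Submodule.mem_span_singleton] at hw
    obtain ⟨γ, rfl⟩ := hw
    exact ⟨α, β, γ, by module⟩
  -- b0 * b0 = t • b0
  obtain ⟨t, ht⟩ : ∃ t : F, b0 * b0 = t • b0 := by
    obtain ⟨α, β, γ, h⟩ := hcoord _ (hmulT b0 hb0T b0 hb0T)
    have h00 := ha.f00 b0 hb0 b0 hb0
    have heq : (0 : F) • a + b0 * b0 + (0 : A) = α • a + β • b0 + γ • be := by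
      rw [← h]; module
    obtain ⟨-, h2, -⟩ := decomp_eq' hη0 hη1 ha.ne_zero ha.idem h00
      (Submodule.smul_mem _ _ hb0) (zero_mem _) (Submodule.smul_mem _ _ hbe) heq
    exact ⟨β, h2⟩
  -- b0 * be = μ • be
  obtain ⟨μ, hμ⟩ : ∃ μ : F, b0 * be = μ • be := by
    obtain ⟨α, β, γ, h⟩ := hcoord _ (hmulT b0 hb0T be hbeT)
    have h0e := ha.fpe b0 (Submodule.mem_sup_right hb0) be hbe
    have heq : (0 : F) • a + (0 : A) + b0 * be = α • a + β • b0 + γ • be := by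
      rw [← h]; module
    obtain ⟨-, -, h3'⟩ := decomp_eq' hη0 hη1 ha.ne_zero ha.idem (zero_mem _)
      (Submodule.smul_mem _ _ hb0) h0e (Submodule.smul_mem _ _ hbe) heq
    exact ⟨γ, h3'⟩
  have heb0 : be * b0 = μ • be := by rw [mul_comm]; exact hμ
  -- be * be = p • a + q • b0
  obtain ⟨p, q, hpq⟩ : ∃ p q : F, be * be = p • a + q • b0 := by
    obtain ⟨α, β, γ, h⟩ := hcoord _ (hmulT be hbeT be hbeT)
    have hee := ha.fee be hbe be hbe
    rw [Submodule.mem_sup] at hee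
    obtain ⟨u, hu, v, hv, huv⟩ := hee
    rw [ha.prim, Submodule.mem_span_singleton] at hu
    obtain ⟨β', rfl⟩ := hu
    have heq : β' • a + v + (0 : A) = α • a + β • b0 + γ • be := by
      rw [← h, ← huv]; module
    obtain ⟨h1, h2, -⟩ := decomp_eq' hη0 hη1 ha.ne_zero ha.idem hv
      (Submodule.smul_mem _ _ hb0) (zero_mem _) (Submodule.smul_mem _ _ hbe) heq
    refine ⟨β', β, ?_⟩
    rw [← huv, h2, h1]
  -- equations from b * b = b
  have hbbc : (φ * φ + p) • a + (t + q) • b0 + (2 * (φ * η) + 2 * μ) • be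
      = φ • a + (1 : F) • b0 + (1 : F) • be := by
    have h : (φ • a + b0 + be) * (φ • a + b0 + be) = φ • a + b0 + be := by
      rw [← hdec]; exact hb.idem
    simp only [mul_add, add_mul, smul_mul_assoc, mul_smul_comm, ha.idem,
      hab0, habe, hb0a, hbea, ht, hμ, heb0, hpq, smul_smul, smul_zero] at h
    linear_combination (norm := module) h
  obtain ⟨hc1, hc2, hc3⟩ := decomp_eq' hη0 hη1 ha.ne_zero ha.idem
    (Submodule.smul_mem _ _ hb0) (Submodule.smul_mem _ _ hb0)
    (Submodule.smul_mem _ _ hbe) (Submodule.smul_mem _ _ hbe) hbbc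
  have hc2' : t + q = 1 := smul_cancel hb0z hc2
  have hc3' : 2 * (φ * η) + 2 * μ = 1 := smul_cancel hbez hc3
  have hμ2 : 2 * μ = 1 - 2 * (φ * η) := by linear_combination hc3'
  have hpval : p = φ - φ * φ := by linear_combination hc1
  -- the key computation with a decomposition of `a` w.r.t. `b`
  have key : ∀ ψ : F, ∀ a0 ∈ eigSp F b 0, ∀ ae ∈ eigSp F b η, a = ψ • b + a0 + ae →
      2 * ((1 - η) * ψ) = η * (2 * φ + 1 - 2 * η) ∧ φ * φ = ψ * φ ∧ η * q = (1 - η) * ψ := by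
    intro ψ a0 ha0 ae hae hadec
    have hba0 : b * a0 = 0 := by rw [mem_eig.mp ha0, zero_smul]
    have hbae : b * ae = η • ae := mem_eig.mp hae
    have hba : b * a = ψ • b + η • ae := by
      rw [hadec, mul_add, mul_add, mul_smul_comm, hb.idem, hba0, hbae, add_zero]
    have hbba : b * (b * a) = ψ • b + (η * η) • ae := by
      rw [hba, mul_add, mul_smul_comm, mul_smul_comm, hb.idem, hbae, smul_smul]
    have hL : b * (b * a) - η • (b * a) = ((1 - η) * ψ) • b := by
      rw [hbba, hba]; module
    have hba' : b * a = φ • a + η • be := by rw [mul_comm]; exact hab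
    have hbba' : b * (b * a)
        = (φ * φ + η * p) • a + (η * q) • b0 + (φ * (η * η) + η * μ + η * φ) • be := by
      have e : b * (b * a) = (φ • a + b0 + be) * (φ • a + η • be) := by
        rw [← hdec, hba']
      rw [e]
      simp only [mul_add, add_mul, smul_mul_assoc, mul_smul_comm, ha.idem,
        hab0, habe, hb0a, hbea, hμ, heb0, hpq, smul_smul, smul_zero]
      module
    have heq : (φ * φ + η * p - η * φ) • a + (η * q) • b0
          + (φ * (η * η) + η * μ + η * φ - η * η) • be
        = ((1 - η) * ψ * φ) • a + ((1 - η) * ψ) • b0 + ((1 - η) * ψ) • be := by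
      have e1 : b * (b * a) - η • (b * a)
          = (φ * φ + η * p - η * φ) • a + (η * q) • b0
            + (φ * (η * η) + η * μ + η * φ - η * η) • be := by
        rw [hbba', hba']; module
      have e2 : ((1 - η) * ψ) • b
          = ((1 - η) * ψ * φ) • a + ((1 - η) * ψ) • b0 + ((1 - η) * ψ) • be := by
        rw [hdec]; module
      rw [← e1, ← e2]; exact hL
    obtain ⟨E1, E2, E3⟩ := decomp_eq' hη0 hη1 ha.ne_zero ha.idem
      (Submodule.smul_mem _ _ hb0) (Submodule.smul_mem _ _ hb0)
      (Submodule.smul_mem _ _ hbe) (Submodule.smul_mem _ _ hbe) heq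
    have E2' : η * q = (1 - η) * ψ := smul_cancel hb0z E2
    have E3' : φ * (η * η) + η * μ + η * φ - η * η = (1 - η) * ψ := smul_cancel hbez E3
    refine ⟨by linear_combination (-2 : F) * E3' + η * hμ2, ?_, E2'⟩
    have e4 : (1 - η) * (φ * φ) = (1 - η) * (ψ * φ) := by
      linear_combination E1 - η * hpval
    exact mul_left_cancel₀ h1mη e4
  obtain ⟨ψ0, a0, ha0, ae, hae, hadec⟩ := exists_decomp hb a
  obtain ⟨k1, k2, k3⟩ := key ψ0 a0 ha0 ae hae hadec
  have h2q : η * (2 * q) = η * (2 * φ + 1 - 2 * η) := by linear_combination 2 * k3 + k1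
  have h2q' : 2 * q = 2 * φ + 1 - 2 * η := mul_left_cancel₀ hη0 h2q
  have ht2 : (2 : F) • (b0 * b0) = (1 + 2 * η - 2 * φ) • b0 := by
    rw [ht, smul_smul]
    have e : 2 * t = 1 + 2 * η - 2 * φ := by linear_combination 2 * hc2' - h2q'
    rw [e]
  refine ⟨φ, b0, hb0, be, hbe, hb0z, hbez, hdec, hab, ht2, ?_⟩
  intro ψ a0' ha0' ae' hae' hdec'
  obtain ⟨k1', k2', -⟩ := key ψ a0' ha0' ae' hae' hdec'
  exact ⟨k1', k2'⟩


end Work3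
section Work4
set_option linter.unusedSectionVars false
set_option maxHeartbeats 1000000

variable {F : Type u} {A : Type v} [Field F] [NonUnitalNonAssocCommRing A]
  [Module F A] [SMulCommClass F A A] [IsScalarTower F A A]

lemma smulLeftCancel {c : F} (hc : c ≠ 0) {x y : A} (h : c • x = c • y) : x = y := by
  have := congrArg (c⁻¹ • ·) h
  simpa [smul_smul, inv_mul_cancel₀ hc] using this

lemma forward {η : F} (hchar : (2 : F) ≠ 0) (hη0 : η ≠ 0) (hη1 : η ≠ 1)
    {a b : A} (ha : IsAxis F η a) (hb : IsAxis F η b)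
    (h3 : Module.finrank F
      ((NonUnitalAlgebra.adjoin F ({a, b} : Set A)).toSubmodule) = 3) :
    a * b ≠ 0 ∧ ∃ σ ∈ NonUnitalAlgebra.adjoin F ({a, b} : Set A), σ ≠ 0 ∧
      ∃ φ : F, a * b = σ + η • a + η • b ∧
        ∀ v ∈ ({a, b, σ} : Set A), σ * v = ((1 - η) * φ - η) • v := by
  obtain ⟨φ, b0, hb0, be, hbe, hb0z, hbez, hdec, habv, ht2, hψ⟩ :=
    side hchar hη0 hη1 ha hb h3
  have h3' : Module.finrank F
      ((NonUnitalAlgebra.adjoin F ({b, a} : Set A)).toSubmodule) = 3 := by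
    rwa [Set.pair_comm b a]
  obtain ⟨ψ, a0, ha0, ae, hae, ha0z, haez, hdec', hbav, ha02, hφ'⟩ :=
    side hchar hη0 hη1 hb ha h3'
  obtain ⟨R1, R2⟩ := hψ ψ a0 ha0 ae hae hdec'
  obtain ⟨R3, R4⟩ := hφ' φ b0 hb0 be hbe hdec
  have hφψ : φ = ψ := by
    have e : (φ - ψ) * (φ - ψ) = 0 := by linear_combination R2 + R4
    exact sub_eq_zero.mp (mul_self_eq_zero.mp e)
  subst hφψ
  have R : 2 * ((1 - η) * φ) = η * (2 * φ + 1 - 2 * η) := R3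
  have hab0 : a * b0 = 0 := by rw [mem_eig.mp hb0, zero_smul]
  have hb0a : b0 * a = 0 := by rw [mul_comm]; exact hab0
  have habe : a * be = η • be := mem_eig.mp hbe
  have ha0b : a0 * b = 0 := by rw [mul_comm, mem_eig.mp ha0, zero_smul]
  have hσa : a * b - η • a - η • b = ((1 - η) * φ - η) • a + (-η) • b0 := by
    rw [habv, hdec]; module
  have hσb : a * b - η • a - η • b = ((1 - η) * φ - η) • b + (-η) • a0 := by
    have e : a * b - η • a - η • b = b * a - η • b - η • a := by
      rw [mul_comm b a]; module
    rw [e, hbav, hdec']; module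
  have haA : a ∈ NonUnitalAlgebra.adjoin F ({a, b} : Set A) :=
    NonUnitalAlgebra.subset_adjoin F (by simp)
  have hbA : b ∈ NonUnitalAlgebra.adjoin F ({a, b} : Set A) :=
    NonUnitalAlgebra.subset_adjoin F (by simp)
  have hσA : a * b - η • a - η • b ∈ NonUnitalAlgebra.adjoin F ({a, b} : Set A) :=
    sub_mem (sub_mem (mul_mem haA hbA) (SMulMemClass.smul_mem _ haA))
      (SMulMemClass.smul_mem _ hbA)
  have hσne : a * b - η • a - η • b ≠ 0 := by
    intro h0
    rw [hσa] at h0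
    have h0' : ((1 - η) * φ - η) • a + (-η) • b0 + (0 : A) = 0 := by
      rw [add_zero]; exact h0
    obtain ⟨-, h2, -⟩ := decomp_zero hη0 hη1 ha.idem
      (Submodule.smul_mem _ _ hb0) (zero_mem _) h0'
    rcases smul_eq_zero.mp h2 with h | h
    · exact hη0 (neg_eq_zero.mp h)
    · exact hb0z h
  have habne : a * b ≠ 0 := by
    intro h0
    have h0' : φ • a + (0 : A) + η • be = 0 := by
      rw [add_zero, ← habv]; exact h0
    obtain ⟨-, -, h2⟩ := decomp_zero hη0 hη1 ha.idem (zero_mem _) (Submodule.smul_mem _ _ hbe) h0'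
    rcases smul_eq_zero.mp h2 with h | h
    · exact hη0 h
    · exact hbez h
  have hσav : (a * b - η • a - η • b) * a = ((1 - η) * φ - η) • a := by
    rw [hσa, add_mul, smul_mul_assoc, smul_mul_assoc, ha.idem, hb0a, smul_zero, add_zero]
  have hσbv : (a * b - η • a - η • b) * b = ((1 - η) * φ - η) • b := by
    rw [hσb, add_mul, smul_mul_assoc, smul_mul_assoc, hb.idem, ha0b, smul_zero, add_zero]
  have hσσv : (a * b - η • a - η • b) * (a * b - η • a - η • b)
      = ((1 - η) * φ - η) • (a * b - η • a - η • b) := by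
    have e0 : (a * b - η • a - η • b) * (a * b - η • a - η • b)
        = (((1 - η) * φ - η) * ((1 - η) * φ - η)) • a + (η * η) • (b0 * b0) := by
      rw [hσa]
      simp only [mul_add, add_mul, smul_mul_assoc, mul_smul_comm, ha.idem,
        hab0, hb0a, smul_smul, smul_zero]
      module
    have e2 : (2 : F) • ((a * b - η • a - η • b) * (a * b - η • a - η • b))
        = (2 : F) • (((1 - η) * φ - η) • (a * b - η • a - η • b)) := by
      rw [e0, hσa]
      rw [smul_add, smul_smul, smul_comm (2 : F) ((η : F) * η) (b0 * b0), ht2]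
      match_scalars
      · ring
      · linear_combination η * R
    exact smulLeftCancel hchar e2
  refine ⟨habne, a * b - η • a - η • b, hσA, hσne, φ, by module, ?_⟩
  intro v hv
  simp only [Set.mem_insert_iff, Set.mem_singleton_iff] at hv
  rcases hv with rfl | rfl | rfl
  · exact hσav
  · exact hσbv
  · exact hσσv

end Work4
section Work5
set_option linter.unusedSectionVars false
set_option maxHeartbeats 1000000

variable {F : Type u} {A : Type v} [Field F] [NonUnitalNonAssocCommRing A]
  [Module F A] [SMulCommClass F A A] [IsScalarTower F A A]

lemma pair_indep {η : F} {a b : A} (ha : IsAxis F η a) (hb : IsAxis F η b)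
    (hab : a ≠ b) {α β : F} (h : α • a + β • b = 0) : α = 0 ∧ β = 0 := by
  by_cases hβ : β = 0
  · refine ⟨?_, hβ⟩
    rw [hβ, zero_smul, add_zero] at h
    exact (smul_eq_zero.mp h).resolve_right ha.ne_zero
  · exfalso
    have hbval : b = (-(β⁻¹ * α)) • a := by
      have e : β • b = (-α) • a := by linear_combination (norm := module) h
      calc b = β⁻¹ • (β • b) := by rw [smul_smul, inv_mul_cancel₀ hβ, one_smul]
      _ = (-(β⁻¹ * α)) • a := by rw [e, smul_smul]; module
    set c : F := -(β⁻¹ * α) with hc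
    have hidem : (c * c) • a = c • a := by
      have e1 : b * b = (c * c) • a := by
        rw [hbval, smul_mul_assoc, mul_smul_comm, ha.idem, smul_smul]
      rw [← e1, hb.idem, hbval]
    have hcc : c * c = c := smul_cancel ha.ne_zero hidem
    rcases mul_eq_zero.mp (by linear_combination hcc : c * (c - 1) = 0) with h' | h'
    · rw [h'] at hbval; rw [zero_smul] at hbval; exact hb.ne_zero hbval
    · have : c = 1 := by linear_combination h'
      rw [this, one_smul] at hbval; exact hab hbval.symm

lemma span_closed {η : F} (hη0 : η ≠ 0) (hη1 : η ≠ 1)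
    {a b σ : A} (ha : IsAxis F η a) (hb : IsAxis F η b) {φ : F}
    (hSig : a * b = σ + η • a + η • b)
    (hσa : σ * a = ((1 - η) * φ - η) • a)
    (hσb : σ * b = ((1 - η) * φ - η) • b)
    (hσσ : σ * σ = ((1 - η) * φ - η) • σ) :
    (NonUnitalAlgebra.adjoin F ({a, b} : Set A)).toSubmodule
      ≤ Submodule.span F ({a, b, σ} : Set A) := by
  have haS : a ∈ Submodule.span F ({a, b, σ} : Set A) := Submodule.subset_span (by simp)
  have hbS : b ∈ Submodule.span F ({a, b, σ} : Set A) := Submodule.subset_span (by simp)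
  have hσS : σ ∈ Submodule.span F ({a, b, σ} : Set A) := Submodule.subset_span (by simp)
  have habS : a * b ∈ Submodule.span F ({a, b, σ} : Set A) := by
    rw [hSig]
    exact add_mem (add_mem hσS (Submodule.smul_mem _ _ haS)) (Submodule.smul_mem _ _ hbS)
  refine adjoin_le_span ?_ ?_
  · intro x hx
    simp only [Set.mem_insert_iff, Set.mem_singleton_iff] at hx
    rcases hx with rfl | rfl
    · exact haS
    · exact hbS
  · intro u hu v hv
    simp only [Set.mem_insert_iff, Set.mem_singleton_iff] at hu hv
    rcases hu with rfl | rfl | rfl <;> rcases hv with rfl | rfl | rfl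
    · rw [ha.idem]; exact haS
    · exact habS
    · rw [mul_comm, hσa]; exact Submodule.smul_mem _ _ haS
    · rw [mul_comm]; exact habS
    · rw [hb.idem]; exact hbS
    · rw [mul_comm, hσb]; exact Submodule.smul_mem _ _ hbS
    · rw [hσa]; exact Submodule.smul_mem _ _ haS
    · rw [hσb]; exact Submodule.smul_mem _ _ hbS
    · rw [hσσ]; exact Submodule.smul_mem _ _ hσS

lemma reverse {η : F} (hη0 : η ≠ 0) (hη1 : η ≠ 1)
    {a b : A} (ha : IsAxis F η a) (hb : IsAxis F η b) (hab : a ≠ b)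
    (habne : a * b ≠ 0) {σ : A}
    (hσA : σ ∈ NonUnitalAlgebra.adjoin F ({a, b} : Set A)) (hσne : σ ≠ 0) {φ : F}
    (hSig : a * b = σ + η • a + η • b)
    (hσa : σ * a = ((1 - η) * φ - η) • a)
    (hσb : σ * b = ((1 - η) * φ - η) • b)
    (hσσ : σ * σ = ((1 - η) * φ - η) • σ) :
    Module.finrank F
      ((NonUnitalAlgebra.adjoin F ({a, b} : Set A)).toSubmodule) = 3 := by
  have hle := span_closed hη0 hη1 ha hb hSig hσa hσb hσσ
  have hge : Submodule.span F ({a, b, σ} : Set A)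
      ≤ (NonUnitalAlgebra.adjoin F ({a, b} : Set A)).toSubmodule := by
    rw [Submodule.span_le]
    intro x hx
    simp only [Set.mem_insert_iff, Set.mem_singleton_iff] at hx
    rw [SetLike.mem_coe, NonUnitalSubalgebra.mem_toSubmodule]
    rcases hx with rfl | rfl | rfl
    · exact NonUnitalAlgebra.subset_adjoin F (by simp)
    · exact NonUnitalAlgebra.subset_adjoin F (by simp)
    · exact hσA
  have hNT : (NonUnitalAlgebra.adjoin F ({a, b} : Set A)).toSubmodule
      = Submodule.span F ({a, b, σ} : Set A) := le_antisymm hle hge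
  -- linear independence of a, b, σ
  have hli : LinearIndependent F ![a, b, σ] := by
    rw [Fintype.linearIndependent_iff]
    intro g hg
    rw [Fin.sum_univ_three] at hg
    simp only [Matrix.cons_val_zero, Matrix.cons_val_one, Matrix.head_cons,
      Matrix.cons_val_two, Matrix.tail_cons] at hg
    by_cases hg2 : g 2 = 0
    · rw [hg2, zero_smul, add_zero] at hg
      obtain ⟨h1, h2⟩ := pair_indep ha hb hab hg
      intro i; fin_cases i
      · exact h1
      · exact h2
      · exact hg2
    · exfalso
      have e : (g 2) • σ = (-(g 0)) • a + (-(g 1)) • b := by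
        linear_combination (norm := module) hg
      have hσeq : σ = ((g 2)⁻¹ * (-(g 0))) • a + ((g 2)⁻¹ * (-(g 1))) • b := by
        calc σ = (g 2)⁻¹ • ((g 2) • σ) := by
              rw [smul_smul, inv_mul_cancel₀ hg2, one_smul]
        _ = _ := by rw [e]; module
      set α' : F := (g 2)⁻¹ * (-(g 0)) with hα'
      set β' : F := (g 2)⁻¹ * (-(g 1)) with hβ'
      have habval : a * b = (α' + η) • a + (β' + η) • b := by
        rw [hSig, hσeq]; module
      have c1 : σ * a = (α' + β' * α' + β' * η) • a + (β' * β' + β' * η) • b := by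
        conv_lhs => rw [hσeq]
        rw [add_mul, smul_mul_assoc, smul_mul_assoc, ha.idem, mul_comm b a, habval]
        module
      have c2 : σ * b = (α' * α' + α' * η) • a + (α' * β' + α' * η + β') • b := by
        conv_lhs => rw [hσeq]
        rw [add_mul, smul_mul_assoc, smul_mul_assoc, hb.idem, habval]
        module
      have d1 : (α' + β' * α' + β' * η - ((1 - η) * φ - η)) • a
          + (β' * β' + β' * η) • b = 0 := by
        have := c1.symm.trans hσa
        linear_combination (norm := module) this
      have d2 : (α' * α' + α' * η) • a
          + (α' * β' + α' * η + β' - ((1 - η) * φ - η)) • b = 0 := by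
        have := c2.symm.trans hσb
        linear_combination (norm := module) this
      obtain ⟨E1, E2⟩ := pair_indep ha hb hab d1
      obtain ⟨E3, E4⟩ := pair_indep ha hb hab d2
      have hβc : β' = 0 ∨ β' = -η := by
        rcases mul_eq_zero.mp (by linear_combination E2 : β' * (β' + η) = 0) with h | h
        · exact Or.inl h
        · exact Or.inr (by linear_combination h)
      have hαc : α' = 0 ∨ α' = -η := by
        rcases mul_eq_zero.mp (by linear_combination E3 : α' * (α' + η) = 0) with h | h
        · exact Or.inl h
        · exact Or.inr (by linear_combination h)
      rcases hαc with hα0 | hαη <;> rcases hβc with hβ0 | hβη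
      · -- σ = 0
        apply hσne
        rw [hσeq, hα0, hβ0, zero_smul, zero_smul, add_zero]
      · -- α' = 0, β' = -η : derive η(1-η) = 0
        have hcontr : (-η) * (1 - η) = 0 := by
          linear_combination E4 - E1 - (1 - η) * hβη + (1 - η) * hα0
        rcases mul_eq_zero.mp hcontr with h | h
        · exact hη0 (neg_eq_zero.mp h)
        · exact hη1 (by linear_combination -h)
      · -- α' = -η, β' = 0
        have hcontr : (-η) * (1 - η) = 0 := by
          linear_combination E1 - E4 - (1 - η) * hαη + (1 - η) * hβ0
        rcases mul_eq_zero.mp hcontr with h | h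
        · exact hη0 (neg_eq_zero.mp h)
        · exact hη1 (by linear_combination -h)
      · -- both -η : a * b = 0
        apply habne
        rw [habval, hαη, hβη]
        module
  have hrange : Set.range ![a, b, σ] = {a, b, σ} := by
    simp [Matrix.range_cons, Matrix.range_empty]
    ext x; simp; tauto
  rw [hNT, ← hrange]
  have h := finrank_span_eq_card (R := F) hli
  simpa using h

lemma ident_iff {η : F} (hη0 : η ≠ 0) (hη1 : η ≠ 1)
    {a b : A} (ha : IsAxis F η a) (hb : IsAxis F η b) {σ : A}
    (hσA : σ ∈ NonUnitalAlgebra.adjoin F ({a, b} : Set A)) (hσne : σ ≠ 0) {φ : F}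
    (hSig : a * b = σ + η • a + η • b)
    (hσa : σ * a = ((1 - η) * φ - η) • a)
    (hσb : σ * b = ((1 - η) * φ - η) • b)
    (hσσ : σ * σ = ((1 - η) * φ - η) • σ) :
    ((∃ e : A, IsIdentOf F (NonUnitalAlgebra.adjoin F ({a, b} : Set A)) e) ↔
        (1 - η) * φ - η ≠ 0) ∧
    ((1 - η) * φ - η ≠ 0 →
      IsIdentOf F (NonUnitalAlgebra.adjoin F ({a, b} : Set A))
        (((1 - η) * φ - η)⁻¹ • σ)) := by
  have hle := span_closed hη0 hη1 ha hb hSig hσa hσb hσσ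
  have hσz : ∀ z ∈ NonUnitalAlgebra.adjoin F ({a, b} : Set A),
      σ * z = ((1 - η) * φ - η) • z := by
    intro z hz
    have hz' : z ∈ Submodule.span F ({a, b, σ} : Set A) := by
      apply hle
      rw [NonUnitalSubalgebra.mem_toSubmodule]
      exact hz
    rw [Submodule.mem_span_insert] at hz'
    obtain ⟨α, z1, hz1, rfl⟩ := hz'
    rw [Submodule.mem_span_insert] at hz1
    obtain ⟨β, z2, hz2, rfl⟩ := hz1
    rw [Submodule.mem_span_singleton] at hz2
    obtain ⟨γ, rfl⟩ := hz2
    rw [mul_add, mul_add, mul_smul_comm, mul_smul_comm, mul_smul_comm,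
      hσa, hσb, hσσ]
    module
  have hident : (1 - η) * φ - η ≠ 0 →
      IsIdentOf F (NonUnitalAlgebra.adjoin F ({a, b} : Set A))
        (((1 - η) * φ - η)⁻¹ • σ) := by
    intro hπ
    refine ⟨SMulMemClass.smul_mem _ hσA, ?_⟩
    intro z hz
    rw [smul_mul_assoc, hσz z hz, smul_smul, inv_mul_cancel₀ hπ, one_smul]
  refine ⟨⟨?_, fun hπ => ⟨_, hident hπ⟩⟩, hident⟩
  rintro ⟨e, heN, hid⟩ hπ0
  apply hσne
  have h1 : e * σ = σ := hid σ hσA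
  have h2 : σ * e = 0 := by rw [hσz e heN, hπ0, zero_smul]
  rw [← h1, mul_comm, h2]

end Work5

/-- For distinct `η`-axes `a, b`, the subalgebra `N_{a,b}` is
3-dimensional precisely when `ab ≠ 0` and there are `0 ≠ σ ∈ N_{a,b}` and
`φ ∈ F` such that, with `π = (1−η)φ − η`, one has `ab = σ + ηa + ηb` and
`σv = πv` for `v ∈ {a, b, σ}`.  Furthermore, when `N_{a,b}` is 3-dimensional
it has an identity element iff `π ≠ 0`, in which case the identity is
`(1/π)σ`. -/
theorem three_dimensional_two_generated_subalgebras
    {F : Type u} {A : Type v} [Field F] [NonUnitalNonAssocCommRing A]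
    [Module F A] [SMulCommClass F A A] [IsScalarTower F A A]
    (hchar : (2 : F) ≠ 0) (η : F) (hη0 : η ≠ 0) (hη1 : η ≠ 1)
    (𝒜 : Set A) (h𝒜 : ∀ a ∈ 𝒜, IsAxis F η a)
    (hgen : NonUnitalAlgebra.adjoin F 𝒜 = ⊤)
    (a b : A) (ha : IsAxis F η a) (hb : IsAxis F η b) (hab : a ≠ b) :
    (Module.finrank F ↥((NonUnitalAlgebra.adjoin F ({a, b} : Set A)).toSubmodule) = 3 ↔
      (a * b ≠ 0 ∧ ∃ σ ∈ NonUnitalAlgebra.adjoin F ({a, b} : Set A), σ ≠ 0 ∧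
        ∃ φ : F, a * b = σ + η • a + η • b ∧
          ∀ v ∈ ({a, b, σ} : Set A), σ * v = ((1 - η) * φ - η) • v)) ∧
    (Module.finrank F ↥((NonUnitalAlgebra.adjoin F ({a, b} : Set A)).toSubmodule) = 3 →
      ∀ σ ∈ NonUnitalAlgebra.adjoin F ({a, b} : Set A), σ ≠ 0 →
      ∀ φ : F, a * b = σ + η • a + η • b →
        (∀ v ∈ ({a, b, σ} : Set A), σ * v = ((1 - η) * φ - η) • v) →
        ((∃ e : A, IsIdentOf F (NonUnitalAlgebra.adjoin F ({a, b} : Set A)) e) ↔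
            (1 - η) * φ - η ≠ 0) ∧
        ((1 - η) * φ - η ≠ 0 →
          IsIdentOf F (NonUnitalAlgebra.adjoin F ({a, b} : Set A))
            (((1 - η) * φ - η)⁻¹ • σ))) := by
  constructor
  · constructor
    · intro h3
      exact forward hchar hη0 hη1 ha hb h3
    · rintro ⟨habne, σ, hσA, hσne, φ, hSig, hv⟩
      exact reverse hη0 hη1 ha hb hab habne hσA hσne hSig
        (hv a (by simp)) (hv b (by simp)) (hv σ (by simp))
  · intro h3 σ hσA hσne φ hSig hv
    exact ident_iff hη0 hη1 ha hb hσA hσne hSig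
      (hv a (by simp)) (hv b (by simp)) (hv σ (by simp))
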